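/- Let S be a nearly Gorenstein numerical semigroup with minimal generators n_1 < ... < n_ν and NG-vector (f_1, ..., f_ν), and suppose f_1, ..., f_i are pairwise distinct for some i ≤ ν. Then: (1) for every f ∈ PF(S) \ {f_1,...,f_i}, f_1 - f = -n_1 + a_{i+1}n_{i+1} + ... + a_ν n_ν with all a_j ≥ 0; (2) f_1 - f_j = n_j - n_1 for every j = 1, ..., i. -/
import Mathlib


/-- A numerical semigroup: a subset of ℕ containing 0, closed under addition,
with finite complement. -/
def IsNumSgp (S : Set ℕ) : Prop :=
  0 ∈ S ∧ (∀ a ∈ S, ∀ b ∈ S, a + b ∈ S) ∧ (Sᶜ : Set ℕ).Finite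

/-- An integer belongs to (the image in ℤ of) S. -/
def memZ (S : Set ℕ) (z : ℤ) : Prop := ∃ s ∈ S, (s : ℤ) = z

/-- F is the Frobenius number of S: the largest natural number not in S. -/
def IsFrob (S : Set ℕ) (F : ℕ) : Prop := F ∉ S ∧ ∀ n, F < n → n ∈ S

/-- The set of pseudo-Frobenius numbers of S. -/
def PF (S : Set ℕ) : Set ℕ := {f | f ∉ S ∧ ∀ s ∈ S, s ≠ 0 → f + s ∈ S}

/-- n is a minimal generator of S. -/
def IsMinGen (S : Set ℕ) (n : ℕ) : Prop :=
  n ∈ S ∧ n ≠ 0 ∧ ¬∃ a ∈ S, ∃ b ∈ S, a ≠ 0 ∧ b ≠ 0 ∧ a + b = n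

/-- S is almost symmetric (Nari): F - f ∈ PF(S) for every f ∈ PF(S). -/
def AlmostSym (S : Set ℕ) (F : ℕ) : Prop :=
  ∀ f ∈ PF S, ∃ g ∈ PF S, (g : ℤ) = (F : ℤ) - (f : ℤ)

/-- S is symmetric: PF(S) = {F(S)} (vacuously true when S = ℕ). -/
def IsSym (S : Set ℕ) : Prop := ∀ F, IsFrob S F → PF S = {F}

/-- (f_1,...,f_ν) is an NG-vector for S with minimal generators n_1,...,n_ν. -/
def IsNGVector {ν : ℕ} (S : Set ℕ) (n f : Fin ν → ℕ) : Prop :=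
  ∀ i, f i ∈ PF S ∧ ∀ g ∈ PF S, memZ S ((n i : ℤ) + (f i : ℤ) - (g : ℤ))

/-- S is nearly Gorenstein (generator criterion): for each minimal generator m
there is f ∈ PF(S) with m + f - g ∈ S for all g ∈ PF(S). -/
def NearlyGGen (S : Set ℕ) : Prop :=
  ∀ m, IsMinGen S m → ∃ f ∈ PF S, ∀ g ∈ PF S, memZ S ((m : ℤ) + (f : ℤ) - (g : ℤ))

/-- The canonical ideal K(S) = {z ∈ ℤ : F - z ∉ S}. -/
def Kan (S : Set ℕ) (F : ℕ) : Set ℤ := {z | ¬ memZ S ((F : ℤ) - z)}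

/-- The relative ideal (S - K(S)) = {z ∈ ℤ : z + K(S) ⊆ S}. -/
def SmK (S : Set ℕ) (F : ℕ) : Set ℤ := {z | ∀ k ∈ Kan S F, memZ S (z + k)}

/-- S is nearly Gorenstein: M(S) ⊆ K(S) + (S - K(S)). -/
def NearlyG (S : Set ℕ) (F : ℕ) : Prop :=
  ∀ m ∈ S, m ≠ 0 → ∃ k ∈ Kan S F, ∃ x ∈ SmK S F, k + x = (m : ℤ)

theorem stmt10 (ν : ℕ) (S : Set ℕ) (F : ℕ) (n f : Fin ν → ℕ)
    (hS : IsNumSgp S) (hF : IsFrob S F) (hmono : StrictMono n)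
    (hgen : ∀ m, IsMinGen S m ↔ ∃ i, n i = m)
    (hNG : IsNGVector S n f) (hν : 0 < ν)
    (i : ℕ) (hi : i ≤ ν)
    (hdist : ∀ j k : Fin ν, (j : ℕ) < i → (k : ℕ) < i → j ≠ k → f j ≠ f k) :
    (∀ g ∈ PF S, (∀ j : Fin ν, (j : ℕ) < i → g ≠ f j) →
      ∃ a : Fin ν → ℕ, (∀ j : Fin ν, (j : ℕ) < i → a j = 0) ∧
        (f ⟨0, hν⟩ : ℤ) - (g : ℤ) = -(n ⟨0, hν⟩ : ℤ) + ∑ j, (a j : ℤ) * (n j : ℤ)) ∧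
    (∀ j : Fin ν, (j : ℕ) < i →
      (f ⟨0, hν⟩ : ℤ) - (f j : ℤ) = (n j : ℤ) - (n ⟨0, hν⟩ : ℤ)) := by

  classical
  obtain ⟨h0, hadd, -⟩ := hS
  set z : Fin ν := ⟨0, hν⟩ with hz
  -- basic facts about the generators
  have hnS : ∀ j : Fin ν, n j ∈ S ∧ n j ≠ 0 := by
    intro j
    have h := (hgen (n j)).mpr ⟨j, rfl⟩
    exact ⟨h.1, h.2.1⟩
  -- multiples of elements of S lie in S
  have hmul : ∀ (a x : ℕ), x ∈ S → a * x ∈ S := by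
    intro a x hx
    induction a with
    | zero => simpa using h0
    | succ k ih => rw [Nat.succ_mul]; exact hadd _ ih _ hx
  -- ℕ-combinations of the generators lie in S
  have hsum : ∀ a : Fin ν → ℕ, (∑ j, a j * n j) ∈ S := by
    intro a
    refine Finset.sum_induction _ (· ∈ S) (fun x y hx hy => hadd x hx y hy) h0 ?_
    intro j _
    exact hmul (a j) (n j) (hnS j).1
  -- every element of S is an ℕ-combination of the generators
  have hrep : ∀ x, x ∈ S → ∃ a : Fin ν → ℕ, x = ∑ j, a j * n j := by
    intro x
    induction x using Nat.strong_induction_on with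
    | _ x ih =>
      intro hx
      rcases eq_or_ne x 0 with rfl | hx0
      · exact ⟨0, by simp⟩
      by_cases hmg : IsMinGen S x
      · obtain ⟨j, hj⟩ := (hgen x).mp hmg
        refine ⟨fun k => if k = j then 1 else 0, ?_⟩
        simp [Finset.sum_ite_eq', hj]
      · have hdec : ∃ a ∈ S, ∃ b ∈ S, a ≠ 0 ∧ b ≠ 0 ∧ a + b = x := by
          by_contra h
          exact hmg ⟨hx, hx0, h⟩
        obtain ⟨a, ha, b, hb, ha0, hb0, hab⟩ := hdec
        obtain ⟨u, hu⟩ := ih a (by omega) ha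
        obtain ⟨v, hv⟩ := ih b (by omega) hb
        refine ⟨u + v, ?_⟩
        rw [← hab, hu, hv, ← Finset.sum_add_distrib]
        exact Finset.sum_congr rfl (fun j _ => by simp [add_mul])
  -- removing one generator from a representation stays in S
  have hsplit : ∀ (x : ℕ) (a : Fin ν → ℕ) (j : Fin ν),
      x = ∑ j', a j' * n j' → a j ≠ 0 → ∃ t ∈ S, t + n j = x := by
    intro x a j hx haj
    set a' : Fin ν → ℕ := Function.update a j (a j - 1) with ha'
    refine ⟨∑ j', a' j' * n j', hsum a', ?_⟩
    have e1 : a j * n j + ∑ j' ∈ Finset.univ.erase j, a j' * n j' = ∑ j', a j' * n j' :=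
      Finset.add_sum_erase _ (fun j' => a j' * n j') (Finset.mem_univ j)
    have e2 : a' j * n j + ∑ j' ∈ Finset.univ.erase j, a' j' * n j' = ∑ j', a' j' * n j' :=
      Finset.add_sum_erase _ (fun j' => a' j' * n j') (Finset.mem_univ j)
    have e3 : ∑ j' ∈ Finset.univ.erase j, a' j' * n j' =
        ∑ j' ∈ Finset.univ.erase j, a j' * n j' := by
      refine Finset.sum_congr rfl (fun x hx => ?_)
      have hxj : x ≠ j := Finset.ne_of_mem_erase hx
      simp [ha', Function.update_of_ne hxj]
    have e4 : a' j = a j - 1 := by simp [ha']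
    obtain ⟨c, hc⟩ : ∃ c, a j = c + 1 := ⟨a j - 1, by omega⟩
    rw [← e2, e3, e4, hc, hx, ← e1, hc]
    simp only [Nat.add_sub_cancel]
    ring
  -- any nonzero element of S is at least n z
  have hmin : ∀ x, x ∈ S → x ≠ 0 → n z ≤ x := by
    intro x hx hx0
    obtain ⟨a, ha⟩ := hrep x hx
    have hj : ∃ j, a j ≠ 0 := by
      by_contra h
      push_neg at h
      apply hx0
      rw [ha]
      exact Finset.sum_eq_zero (fun j _ => by rw [h j, zero_mul])
    obtain ⟨j, hj⟩ := hj
    have h1 : n j ≤ a j * n j := Nat.le_mul_of_pos_left _ (Nat.pos_of_ne_zero hj)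
    have h2 : a j * n j ≤ x := by
      rw [ha]
      exact Finset.single_le_sum (f := fun l => a l * n l) (fun l _ => Nat.zero_le _) (Finset.mem_univ j)
    have h3 : n z ≤ n j := hmono.monotone (by simp [hz, Fin.le_def])
    omega
  -- part (2), by strong induction
  have key2 : ∀ m : ℕ, ∀ (hm : m < ν), m < i →
      (f z : ℤ) - (f ⟨m, hm⟩ : ℤ) = (n ⟨m, hm⟩ : ℤ) - (n z : ℤ) := by
    intro m
    induction m using Nat.strong_induction_on with
    | _ m ih =>
      intro hm hmi
      set k : Fin ν := ⟨m, hm⟩ with hk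
      have hfk : f k ∈ PF S := (hNG k).1
      have hfz : f z ∈ PF S := (hNG z).1
      obtain ⟨s, hsS, hs⟩ := (hNG z).2 (f k) hfk
      obtain ⟨w, hwS, hw⟩ := (hNG k).2 (f z) hfz
      have hw0 : w ≠ 0 := by
        intro h
        subst h
        have : (f z : ℤ) = (n k : ℤ) + (f k : ℤ) := by push_cast at hw ⊢; linarith
        have hfzv : f z = n k + f k := by exact_mod_cast this
        exact hfz.1 (hfzv ▸ (by rw [add_comm]; exact hfk.2 (n k) (hnS k).1 (hnS k).2))
      have hwge : n z ≤ w := hmin w hwS hw0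
      have hsle : s ≤ n k := by
        have : (s : ℤ) + (w : ℤ) = (n z : ℤ) + (n k : ℤ) := by linarith [hs, hw]
        have h2 : (s : ℤ) ≤ (n k : ℤ) := by
          have : (n z : ℤ) ≤ (w : ℤ) := by exact_mod_cast hwge
          linarith
        exact_mod_cast h2
      have hs0 : s ≠ 0 := by
        intro h
        subst h
        have : (f k : ℤ) = (n z : ℤ) + (f z : ℤ) := by push_cast at hs ⊢; linarith
        have hfkv : f k = n z + f z := by exact_mod_cast this
        exact hfk.1 (hfkv ▸ (by rw [add_comm]; exact hfz.2 (n z) (hnS z).1 (hnS z).2))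
      obtain ⟨a, ha⟩ := hrep s hsS
      have hj : ∃ j, a j ≠ 0 := by
        by_contra h
        push_neg at h
        apply hs0
        rw [ha]
        exact Finset.sum_eq_zero (fun j _ => by rw [h j, zero_mul])
      obtain ⟨j, hjne⟩ := hj
      have hnjs : n j ≤ s := by
        have h1 : n j ≤ a j * n j := Nat.le_mul_of_pos_left _ (Nat.pos_of_ne_zero hjne)
        have h2 : a j * n j ≤ s := by
          rw [ha]
          exact Finset.single_le_sum (f := fun l => a l * n l) (fun l _ => Nat.zero_le _) (Finset.mem_univ j)
        omega
      have hjk : (j : ℕ) ≤ m := by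
        by_contra h
        push_neg at h
        have : n k < n j := hmono (by simp [hk, Fin.lt_def]; omega)
        omega
      obtain ⟨t, htS, ht⟩ := hsplit s a j ha hjne
      rcases eq_or_lt_of_le hjk with heq | hlt
      · -- j = k, so s = n k and we are done
        have hjk2 : j = k := by
          apply Fin.ext
          simp [hk, heq]
        rw [hjk2] at ht
        have ht0 : t = 0 := by omega
        have hsnk : s = n k := by omega
        rw [hsnk] at hs
        push_cast at hs ⊢
        linarith
      · -- j < k : use induction hypothesis to get a contradiction
        exfalso
        have hjfin : (⟨(j : ℕ), j.2⟩ : Fin ν) = j := Fin.ext rfl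
        have hfm := ih (j : ℕ) hlt j.2 (by omega)
        rw [hjfin] at hfm
        -- hfm : f z - f j = n j - n z
        rcases eq_or_ne t 0 with ht0 | ht0
        · -- s = n j, forcing f k = f j
          have hsnj : s = n j := by omega
          have : (f k : ℤ) = (f j : ℤ) := by
            rw [hsnj] at hs
            linarith
          have hfkj : f k = f j := by exact_mod_cast this
          have hjnek : j ≠ k := by
            intro h
            rw [h] at hlt
            simp [hk] at hlt
          exact hdist j k (by omega) (by simp [hk]; omega) hjnek hfkj.symm
        · -- t ≠ 0, so f k + t = f j ∈ S, contradiction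
          have hfkt : f k + t ∈ S := hfk.2 t htS ht0
          have : (f k : ℤ) + (t : ℤ) = (f j : ℤ) := by
            have htz : (t : ℤ) = (s : ℤ) - (n j : ℤ) := by
              have := ht
              push_cast [← this]
              ring
            rw [htz]
            linarith
          have hfj : f k + t = f j := by exact_mod_cast this
          exact ((hNG j).1).1 (hfj ▸ hfkt)
  refine ⟨?_, fun j hj => by
    have := key2 (j : ℕ) j.2 hj
    simpa using this⟩
  -- part (1)
  intro g hg hne
  obtain ⟨s, hsS, hs⟩ := (hNG z).2 g hg
  obtain ⟨a, ha⟩ := hrep s hsS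
  have haz : ∀ j : Fin ν, (j : ℕ) < i → a j = 0 := by
    intro j hji
    by_contra hjne
    obtain ⟨t, htS, ht⟩ := hsplit s a j ha hjne
    have hjfin : (⟨(j : ℕ), j.2⟩ : Fin ν) = j := Fin.ext rfl
    have hfm := key2 (j : ℕ) j.2 hji
    rw [hjfin] at hfm
    rcases eq_or_ne t 0 with ht0 | ht0
    · have hsnj : s = n j := by omega
      have : (g : ℤ) = (f j : ℤ) := by
        rw [hsnj] at hs
        linarith
      exact hne j hji (by exact_mod_cast this)
    · have hgt : g + t ∈ S := hg.2 t htS ht0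
      have : (g : ℤ) + (t : ℤ) = (f j : ℤ) := by
        have htz : (t : ℤ) = (s : ℤ) - (n j : ℤ) := by
          have := ht
          push_cast [← this]
          ring
        rw [htz]
        linarith
      have hfj : g + t = f j := by exact_mod_cast this
      exact ((hNG j).1).1 (hfj ▸ hgt)
  refine ⟨a, haz, ?_⟩
  have hcast : (s : ℤ) = ∑ j, (a j : ℤ) * (n j : ℤ) := by
    rw [ha]
    push_cast
    rfl
  rw [← hz] at *
  linarith [hs, hcast]
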